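/- arXiv:1411.6693 — 3 statements merged into one kernel-verified Lean document; each statement's English description precedes it below -/
import Mathlib

section
/- If L is a right Leibniz algebra with product [·,·], then the trilinear operation {x,y,z} := [[x,y],z] makes L into a Leibniz triple system, i.e., it satisfies the two defining identities {a,{b,c,d},e} = {{a,b,c},d,e} − {{a,c,b},d,e} − {{a,d,b},c,e} + {{a,d,c},b,e} and {a,b,{c,d,e}} = {{a,b,c},d,e} − {{a,b,d},c,e} − {{a,b,e},c,d} + {{a,b,e},d,c}. -/
/-- If `L` is a right Leibniz algebra with product `br`, then the trilinear operation
`{x,y,z} := [[x,y],z]` makes `L` into a Leibniz triple system. -/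
theorem leibniz_algebra_gives_leibniz_triple_system
    {K L : Type*} [Field K] [AddCommGroup L] [Module K L]
    (br : L →ₗ[K] L →ₗ[K] L)
    (leib : ∀ x y z : L, br (br x y) z = br (br x z) y + br x (br y z)) :
    (∀ a b c d e : L,
        br (br a (br (br b c) d)) e =
          br (br (br (br a b) c) d) e - br (br (br (br a c) b) d) e -
            br (br (br (br a d) b) c) e + br (br (br (br a d) c) b) e) ∧
    (∀ a b c d e : L,
        br (br a b) (br (br c d) e) =
          br (br (br (br a b) c) d) e - br (br (br (br a b) d) c) e -
            br (br (br (br a b) e) c) d + br (br (br (br a b) e) d) c) := by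
  have h : ∀ x y z : L, br x (br y z) = br (br x y) z - br (br x z) y := by
    intro x y z
    rw [eq_sub_iff_add_eq, add_comm]
    exact (leib x y z).symm
  constructor <;> intro a b c d e <;>
    simp only [h, map_sub, LinearMap.sub_apply] <;> abel
end

section
/- In any Leibniz triple system T, the identity {{c,d,e},b,a} − {{c,d,e},a,b} − {{c,b,a},d,e} + {{c,a,b},d,e} − {c,{a,b,d},e} − {c,d,{a,b,e}} = 0 holds for all a,b,c,d,e ∈ T. -/
/-- In any Leibniz triple system `T`, the identity
`{{c,d,e},b,a} − {{c,d,e},a,b} − {{c,b,a},d,e} + {{c,a,b},d,e} − {c,{a,b,d},e} − {c,d,{a,b,e}} = 0`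
holds. -/
theorem leibniz_triple_system_identity
    {K T : Type*} [Field K] [AddCommGroup T] [Module K T]
    (t : T →ₗ[K] T →ₗ[K] T →ₗ[K] T)
    (id1 : ∀ a b c d e : T,
        t a (t b c d) e =
          t (t a b c) d e - t (t a c b) d e - t (t a d b) c e + t (t a d c) b e)
    (id2 : ∀ a b c d e : T,
        t a b (t c d e) =
          t (t a b c) d e - t (t a b d) c e - t (t a b e) c d + t (t a b e) d c) :
    ∀ a b c d e : T,
      t (t c d e) b a - t (t c d e) a b - t (t c b a) d e + t (t c a b) d e -
        t c (t a b d) e - t c d (t a b e) = 0 := by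
  intro a b c d e
  rw [id1 c a b d e, id2 c d a b e]
  abel
end

section
/- Let T be a Leibniz triple system and let J be the ideal generated by the set {{a,b,c} − {a,c,b} + {b,c,a} : a,b,c ∈ T}. Then {T,T,J} = 0 and {T,J,T} = 0. -/
/-- Let `J` be the ideal of a Leibniz triple system `T` generated by the set
`{{a,b,c} − {a,c,b} + {b,c,a} : a,b,c ∈ T}`.  Then `{T,T,J} = 0` and `{T,J,T} = 0`. -/
theorem leibniz_triple_system_ideal_J
    {K T : Type*} [Field K] [AddCommGroup T] [Module K T]
    (t : T →ₗ[K] T →ₗ[K] T →ₗ[K] T)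
    (id1 : ∀ a b c d e : T,
        t a (t b c d) e =
          t (t a b c) d e - t (t a c b) d e - t (t a d b) c e + t (t a d c) b e)
    (id2 : ∀ a b c d e : T,
        t a b (t c d e) =
          t (t a b c) d e - t (t a b d) c e - t (t a b e) c d + t (t a b e) d c)
    (IsIdeal : Submodule K T → Prop)
    (hIsIdeal : ∀ I : Submodule K T,
      IsIdeal I ↔ ∀ x ∈ I, ∀ y z : T, t x y z ∈ I ∧ t y x z ∈ I ∧ t y z x ∈ I)
    (J : Submodule K T)
    (hJ : J = sInf {I : Submodule K T |
      IsIdeal I ∧ {x : T | ∃ a b c : T, x = t a b c - t a c b + t b c a} ⊆ (I : Set T)}) :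
    ∀ x y : T, ∀ j ∈ J, t x y j = 0 ∧ t x j y = 0 := by
  -- the "annihilated" submodule
  set N : Submodule K T :=
    { carrier := {j : T | ∀ x y : T, t x y j = 0 ∧ t x j y = 0}
      add_mem' := by
        intro a b ha hb x y
        constructor
        · simp [map_add, (ha x y).1, (hb x y).1]
        · simp [map_add, (ha x y).2, (hb x y).2]
      zero_mem' := by intro x y; simp
      smul_mem' := by
        intro c a ha x y
        constructor
        · simp [map_smul, (ha x y).1]
        · simp [map_smul, (ha x y).2] } with hN
  have hJN : J ≤ N := by
    rw [hJ]
    apply sInf_le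
    constructor
    · rw [hIsIdeal]
      intro j hj y z
      have hj1 : ∀ x y : T, t x y j = 0 := fun x y => (hj x y).1
      have hj2 : ∀ x y : T, t x j y = 0 := fun x y => (hj x y).2
      refine ⟨?_, ?_, ?_⟩
      · -- t j y z ∈ N
        intro u v
        constructor
        · simp [id2, hj1, hj2]
        · simp [id1, hj1, hj2]
      · -- t y j z = 0 ∈ N
        rw [hj2]; exact N.zero_mem
      · rw [hj1]; exact N.zero_mem
    · rintro x ⟨a, b, c, rfl⟩
      intro u v
      constructor
      · simp only [map_sub, map_add, LinearMap.sub_apply, LinearMap.add_apply, id2]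
        abel
      · simp only [map_sub, map_add, LinearMap.sub_apply, LinearMap.add_apply, id1]
        abel
  intro x y j hj
  exact hJN hj x y
end
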